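/- arXiv:1301.3078 — 3 statements merged into one kernel-verified Lean document; each statement's English description precedes it below -/
import Mathlib

section
/- Let s ≥ 1 and let d = (d_1,…,d_s) be a multidegree with every d_i ≥ 2 and not (s = 1 and d_1 = 2). Then for every integer k' ≥ −1, Σ_{i=1}^s C(d_i+k', k'+2) ≥ 2; consequently the second forward difference δ(n,d,k,k'+2) − 2·δ(n,d,k,k'+1) + δ(n,d,k,k') is nonnegative for all k' ≥ −1, i.e. the function k' ↦ δ(n,d,k,k') is convex on {−1, 0, …, k}. -/
/-- Binomial coefficient on integers, with the convention `C(a, b) = 0`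
whenever `a < 0` or `b < 0` (in particular `C(m, -1) = 0`). -/
def chooseZ (a b : ℤ) : ℤ :=
  if 0 ≤ a ∧ 0 ≤ b then (a.toNat.choose b.toNat : ℤ) else 0

/-- The expected dimension `δ(n, d, k, k')` of the locus of `k`-planes `Λ` in
`V(f)` with `dim (Λ ∩ Λ') = k'`. -/
def deltaKL (n k : ℕ) {s : ℕ} (d : Fin s → ℕ) (k' : ℤ) : ℤ :=
  ((k : ℤ) - k') * ((n : ℤ) - (k : ℤ) + k' + 1)
    + ∑ i, chooseZ ((d i : ℤ) + k') k'
    - ∑ i, chooseZ ((d i : ℤ) + (k : ℤ)) (k : ℤ)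

lemma chooseZ_natCast (a b : ℕ) : chooseZ (a : ℤ) (b : ℤ) = (a.choose b : ℤ) := by
  simp [chooseZ]

lemma chooseZ_nonneg (a b : ℤ) : 0 ≤ chooseZ a b := by
  unfold chooseZ
  split <;> positivity

lemma chooseZ_neg_right (a b : ℤ) (hb : b < 0) : chooseZ a b = 0 := by
  unfold chooseZ
  rw [if_neg]
  rintro ⟨-, h⟩; omega


lemma chooseZ_zero_right (a : ℤ) (ha : 0 ≤ a) : chooseZ a 0 = 1 := by
  simp [chooseZ, ha]

lemma chooseZ_one_right (a : ℤ) (ha : 0 ≤ a) : chooseZ a 1 = a := by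
  unfold chooseZ
  rw [if_pos ⟨ha, by norm_num⟩]
  simp [Nat.choose_one_right, Int.toNat_of_nonneg ha]

/-- decomposition of arguments for `d ≥ 2`, `k' ≥ -1`, `k' = m` natural -/
lemma key_term (e : ℕ) (k' : ℤ) (hk : -1 ≤ k') :
    chooseZ ((e : ℤ) + 2 + (k' + 2)) (k' + 2) - 2 * chooseZ ((e : ℤ) + 2 + (k' + 1)) (k' + 1)
      + chooseZ ((e : ℤ) + 2 + k') k' = chooseZ ((e : ℤ) + 2 + k') (k' + 2) := by
  rcases eq_or_lt_of_le hk with h | h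
  · -- k' = -1
    subst_eqs
    have h1 : chooseZ ((e : ℤ) + 2 + (-1 + 2)) (-1 + 2) = (e : ℤ) + 3 := by
      rw [show ((-1 : ℤ) + 2) = 1 by norm_num, chooseZ_one_right _ (by omega)]; ring
    have h2 : chooseZ ((e : ℤ) + 2 + (-1 + 1)) (-1 + 1) = 1 := by
      rw [show ((-1 : ℤ) + 1) = 0 by norm_num, chooseZ_zero_right _ (by omega)]
    have h3 : chooseZ ((e : ℤ) + 2 + -1) (-1) = 0 := chooseZ_neg_right _ _ (by norm_num)
    have h4 : chooseZ ((e : ℤ) + 2 + -1) (-1 + 2) = (e : ℤ) + 1 := by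
      rw [show ((-1 : ℤ) + 2) = 1 by norm_num, chooseZ_one_right _ (by omega)]; ring
    rw [h1, h2, h3, h4]; ring
  · -- k' ≥ 0
    obtain ⟨m, rfl⟩ := Int.eq_ofNat_of_zero_le (by omega : (0 : ℤ) ≤ k')
    have h1 : ((e : ℤ) + 2 + ((m : ℤ) + 2)) = ((e + m + 4 : ℕ) : ℤ) := by push_cast; ring
    have h2 : ((e : ℤ) + 2 + ((m : ℤ) + 1)) = ((e + m + 3 : ℕ) : ℤ) := by push_cast; ring
    have h3 : ((e : ℤ) + 2 + (m : ℤ)) = ((e + m + 2 : ℕ) : ℤ) := by push_cast; ring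
    have h4 : ((m : ℤ) + 2) = ((m + 2 : ℕ) : ℤ) := by push_cast; ring
    have h5 : ((m : ℤ) + 1) = ((m + 1 : ℕ) : ℤ) := by push_cast; ring
    rw [h1, h2, h3, h4, h5, chooseZ_natCast, chooseZ_natCast, chooseZ_natCast, chooseZ_natCast]
    have p1 : (e + m + 4).choose (m + 2) = (e + m + 3).choose (m + 1) + (e + m + 3).choose (m + 2) := by
      have := Nat.choose_succ_succ (e + m + 3) (m + 1)
      simpa [Nat.succ_eq_add_one] using this
    have p2 : (e + m + 3).choose (m + 1) = (e + m + 2).choose m + (e + m + 2).choose (m + 1) := by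
      have := Nat.choose_succ_succ (e + m + 2) m
      simpa [Nat.succ_eq_add_one] using this
    have p3 : (e + m + 3).choose (m + 2) = (e + m + 2).choose (m + 1) + (e + m + 2).choose (m + 2) := by
      have := Nat.choose_succ_succ (e + m + 2) (m + 1)
      simpa [Nat.succ_eq_add_one] using this
    rw [p1, p2, p3]
    push_cast
    ring

lemma one_le_term (e : ℕ) (k' : ℤ) (hk : -1 ≤ k') :
    1 ≤ chooseZ ((e : ℤ) + 2 + k') (k' + 2) := by
  rcases eq_or_lt_of_le hk with h | h
  · subst_eqs
    rw [show ((-1 : ℤ) + 2) = 1 by norm_num, chooseZ_one_right _ (by omega)]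
    omega
  · obtain ⟨m, rfl⟩ := Int.eq_ofNat_of_zero_le (by omega : (0 : ℤ) ≤ k')
    rw [show ((e : ℤ) + 2 + (m : ℤ)) = ((e + m + 2 : ℕ) : ℤ) by push_cast; ring,
      show ((m : ℤ) + 2) = ((m + 2 : ℕ) : ℤ) by push_cast; ring, chooseZ_natCast]
    exact_mod_cast Nat.choose_pos (by omega)

lemma two_le_term (e : ℕ) (he : 1 ≤ e) (k' : ℤ) (hk : -1 ≤ k') :
    2 ≤ chooseZ ((e : ℤ) + 2 + k') (k' + 2) := by
  rcases eq_or_lt_of_le hk with h | h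
  · subst_eqs
    rw [show ((-1 : ℤ) + 2) = 1 by norm_num, chooseZ_one_right _ (by omega)]
    omega
  · obtain ⟨m, rfl⟩ := Int.eq_ofNat_of_zero_le (by omega : (0 : ℤ) ≤ k')
    rw [show ((e : ℤ) + 2 + (m : ℤ)) = ((e + m + 2 : ℕ) : ℤ) by push_cast; ring,
      show ((m : ℤ) + 2) = ((m + 2 : ℕ) : ℤ) by push_cast; ring, chooseZ_natCast]
    have h1 : (m + 3).choose (m + 2) ≤ (e + m + 2).choose (m + 2) :=
      Nat.choose_le_choose _ (by omega)
    have h2 : (m + 3).choose (m + 2) = m + 3 := by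
      have := Nat.choose_succ_self_right (m + 2)
      simpa using this
    have : (2 : ℕ) ≤ (e + m + 2).choose (m + 2) := by omega
    exact_mod_cast this

theorem delta_convex
    (n k s : ℕ) (hs : 1 ≤ s) (d : Fin s → ℕ) (hd : ∀ i, 2 ≤ d i)
    (hd2 : ¬(s = 1 ∧ ∀ i, d i = 2)) :
    (∀ k' : ℤ, -1 ≤ k' → 2 ≤ ∑ i, chooseZ ((d i : ℤ) + k') (k' + 2)) ∧
    (∀ k' : ℤ, -1 ≤ k' →
      0 ≤ deltaKL n k d (k' + 2) - 2 * deltaKL n k d (k' + 1) + deltaKL n k d k') := by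
  have hrewrite : ∀ (i : Fin s) (x : ℤ), ((d i : ℤ) + x) = ((d i - 2 : ℕ) : ℤ) + 2 + x := by
    intro i x
    have := hd i
    push_cast [Nat.cast_sub this]
    ring
  have part1 : ∀ k' : ℤ, -1 ≤ k' → 2 ≤ ∑ i, chooseZ ((d i : ℤ) + k') (k' + 2) := by
    intro k' hk
    by_cases hall : ∀ i, d i = 2
    · -- then s ≥ 2
      have hs2 : 2 ≤ s := by
        have hne : s ≠ 1 := fun h => hd2 ⟨h, hall⟩
        omega
      calc (2 : ℤ) ≤ (s : ℤ) := by exact_mod_cast hs2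
        _ = ∑ _i : Fin s, (1 : ℤ) := by simp
        _ ≤ ∑ i, chooseZ ((d i : ℤ) + k') (k' + 2) := by
            apply Finset.sum_le_sum
            intro i _
            rw [hrewrite i]
            exact one_le_term _ _ hk
    · push_neg at hall
      obtain ⟨i0, hi0⟩ := hall
      have hi3 : 3 ≤ d i0 := by have := hd i0; omega
      have hterm : 2 ≤ chooseZ ((d i0 : ℤ) + k') (k' + 2) := by
        rw [hrewrite i0]
        exact two_le_term _ (by omega) _ hk
      have := Finset.single_le_sum (f := fun i => chooseZ ((d i : ℤ) + k') (k' + 2))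
        (fun i _ => chooseZ_nonneg _ _) (Finset.mem_univ i0)
      linarith
  refine ⟨part1, ?_⟩
  intro k' hk
  have hsum : ∑ i, (chooseZ ((d i : ℤ) + (k' + 2)) (k' + 2)
        - 2 * chooseZ ((d i : ℤ) + (k' + 1)) (k' + 1)
        + chooseZ ((d i : ℤ) + k') k')
      = ∑ i, chooseZ ((d i : ℤ) + k') (k' + 2) := by
    apply Finset.sum_congr rfl
    intro i _
    have h1 : ((d i : ℤ) + (k' + 2)) = ((d i - 2 : ℕ) : ℤ) + 2 + (k' + 2) := hrewrite i _
    have h2 : ((d i : ℤ) + (k' + 1)) = ((d i - 2 : ℕ) : ℤ) + 2 + (k' + 1) := hrewrite i _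
    have h3 : ((d i : ℤ) + k') = ((d i - 2 : ℕ) : ℤ) + 2 + k' := hrewrite i _
    rw [h1, h2, h3]
    exact key_term _ _ hk
  rw [Finset.sum_add_distrib, Finset.sum_sub_distrib, ← Finset.mul_sum] at hsum
  have hT := part1 k' hk
  simp only [deltaKL]
  have hlin : ((k : ℤ) - (k' + 2)) * ((n : ℤ) - (k : ℤ) + (k' + 2) + 1)
      - 2 * (((k : ℤ) - (k' + 1)) * ((n : ℤ) - (k : ℤ) + (k' + 1) + 1))
      + ((k : ℤ) - k') * ((n : ℤ) - (k : ℤ) + k' + 1) = -2 := by ring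
  nlinarith [hsum, hT, hlin]
end

section
/- Let n, k, s be natural numbers with s ≥ 1, and let d = (d_1,…,d_s) be a multidegree with every d_i ≥ 2 and not (s = 1 and d_1 = 2). If δ(n,d,k) < 0, then δ(n,d,k,k') < 0 for every integer k' with −1 ≤ k' ≤ k−1, while δ(n,d,k,k) = 0. -/
/-- Reparametrized delta: `gFun j = δ(n,d,k, j-1)`. -/
def gFun (n k : ℕ) {s : ℕ} (d : Fin s → ℕ) (j : ℕ) : ℤ :=
  deltaKL n k d ((j : ℤ) - 1)

/-- The increment `gFun (j+1) - gFun j`. -/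
def dFun (n k : ℕ) {s : ℕ} (d : Fin s → ℕ) (j : ℕ) : ℤ :=
  2 * k - n - 2 * j + ∑ i, ((d i - 1 + j).choose j : ℤ)

lemma chooseZ_natCast_s12 (x y : ℕ) : chooseZ (x : ℤ) (y : ℤ) = (x.choose y : ℤ) := by
  simp [chooseZ]

lemma choose_point (m j : ℕ) (hm : 1 ≤ m) :
    chooseZ ((m : ℤ) + (j : ℤ)) (j : ℤ)
      = chooseZ ((m : ℤ) + ((j : ℤ) - 1)) ((j : ℤ) - 1) + ((m - 1 + j).choose j : ℤ) := by
  cases j with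
  | zero =>
      have h1 : chooseZ ((m : ℤ) + ((0:ℤ) - 1)) ((0:ℤ) - 1) = 0 := by
        simp [chooseZ]
      norm_num [h1, chooseZ]
  | succ t =>
      have e1 : (m : ℤ) + ((t + 1 : ℕ) : ℤ) = ((m + t + 1 : ℕ) : ℤ) := by push_cast; ring
      have e2 : (m : ℤ) + (((t + 1 : ℕ) : ℤ) - 1) = ((m + t : ℕ) : ℤ) := by push_cast; ring
      have e3 : ((t + 1 : ℕ) : ℤ) - 1 = ((t : ℕ) : ℤ) := by push_cast; ring
      rw [e1, e2, e3, chooseZ_natCast_s12, chooseZ_natCast_s12]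
      have e4 : m - 1 + (t + 1) = m + t := by omega
      rw [e4, Nat.choose_succ_succ (m + t) t]
      push_cast; ring

lemma g_step (n k : ℕ) {s : ℕ} (d : Fin s → ℕ) (hd : ∀ i, 1 ≤ d i) (j : ℕ) :
    gFun n k d (j + 1) = gFun n k d j + dFun n k d j := by
  unfold gFun dFun deltaKL
  have e1 : ((j + 1 : ℕ) : ℤ) - 1 = (j : ℤ) := by push_cast; ring
  rw [e1]
  have hsum : ∑ i, chooseZ ((d i : ℤ) + (j : ℤ)) (j : ℤ)
      = ∑ i, chooseZ ((d i : ℤ) + ((j : ℤ) - 1)) ((j : ℤ) - 1)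
        + ∑ i, ((d i - 1 + j).choose j : ℤ) := by
    rw [← Finset.sum_add_distrib]
    exact Finset.sum_congr rfl fun i _ => choose_point (d i) j (hd i)
  rw [hsum]
  push_cast
  ring

lemma d_step (n k : ℕ) {s : ℕ} (d : Fin s → ℕ) (j : ℕ) :
    dFun n k d (j + 1)
      = dFun n k d j + (-2 + ∑ i, ((d i - 1 + j).choose (j + 1) : ℤ)) := by
  unfold dFun
  have h : ∀ i : Fin s, ((d i - 1 + (j + 1)).choose (j + 1) : ℤ)
      = ((d i - 1 + j).choose j : ℤ) + ((d i - 1 + j).choose (j + 1) : ℤ) := by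
    intro i
    have e : d i - 1 + (j + 1) = (d i - 1 + j) + 1 := by omega
    rw [e, Nat.choose_succ_succ]
    push_cast; ring
  rw [Finset.sum_congr rfl fun i _ => h i, Finset.sum_add_distrib]
  push_cast; ring

lemma sum_ge_two {s : ℕ} (d : Fin s → ℕ) (hs : 1 ≤ s) (hd : ∀ i, 2 ≤ d i)
    (hd2 : ¬(s = 1 ∧ ∀ i, d i = 2)) (j : ℕ) :
    2 ≤ ∑ i, ((d i - 1 + j).choose (j + 1) : ℤ) := by
  by_cases hx : ∃ i, 3 ≤ d i
  · obtain ⟨i0, hi0⟩ := hx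
    have h1 : (2 : ℤ) ≤ ((d i0 - 1 + j).choose (j + 1) : ℤ) := by
      have h2 : j + 2 ≤ d i0 - 1 + j := by omega
      have h3 : (j + 2).choose (j + 1) ≤ (d i0 - 1 + j).choose (j + 1) :=
        Nat.choose_le_choose (j + 1) h2
      have h4 : (j + 2).choose (j + 1) = j + 2 := by
        have := Nat.choose_succ_self_right (j + 1)
        simpa using this
      have : 2 ≤ (d i0 - 1 + j).choose (j + 1) := by omega
      exact_mod_cast this
    calc (2 : ℤ) ≤ ((d i0 - 1 + j).choose (j + 1) : ℤ) := h1
      _ ≤ ∑ i, ((d i - 1 + j).choose (j + 1) : ℤ) :=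
        Finset.single_le_sum (f := fun i => ((d i - 1 + j).choose (j + 1) : ℤ))
          (fun i _ => by positivity) (Finset.mem_univ i0)
  · push_neg at hx
    have hall : ∀ i, d i = 2 := fun i => by have := hd i; have := hx i; omega
    have hs2 : 2 ≤ s := by
      rcases Nat.lt_or_ge s 2 with h | h
      · exact absurd ⟨by omega, hall⟩ hd2
      · exact h
    have : ∀ i : Fin s, ((d i - 1 + j).choose (j + 1) : ℤ) = 1 := by
      intro i
      have e : d i - 1 + j = j + 1 := by have := hall i; omega
      rw [e, Nat.choose_self]; norm_num
    rw [Finset.sum_congr rfl fun i _ => this i, Finset.sum_const, Finset.card_univ,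
      Fintype.card_fin]
    simp
    exact_mod_cast hs2

lemma d_mono (n k : ℕ) {s : ℕ} (d : Fin s → ℕ) (hs : 1 ≤ s) (hd : ∀ i, 2 ≤ d i)
    (hd2 : ¬(s = 1 ∧ ∀ i, d i = 2)) :
    ∀ a b : ℕ, a ≤ b → dFun n k d a ≤ dFun n k d b := by
  intro a b hab
  induction b, hab using Nat.le_induction with
  | base => exact le_refl _
  | succ b hb ih =>
      have := sum_ge_two d hs hd hd2 b
      have := d_step n k d b
      linarith

lemma g_le_zero_step (n k : ℕ) {s : ℕ} (d : Fin s → ℕ) (hd : ∀ i, 1 ≤ d i) :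
    ∀ j : ℕ, (∀ i, i < j → dFun n k d i ≤ 0) → gFun n k d j ≤ gFun n k d 0 := by
  intro j
  induction j with
  | zero => intro _; exact le_refl _
  | succ j ih =>
      intro h
      have h1 := g_step n k d hd j
      have h2 := h j (by omega)
      have h3 := ih fun i hi => h i (by omega)
      linarith

lemma g_lower (n k : ℕ) {s : ℕ} (d : Fin s → ℕ) (hd : ∀ i, 1 ≤ d i) (j : ℕ)
    (h : ∀ i, j ≤ i → 1 ≤ dFun n k d i) :
    ∀ t : ℕ, gFun n k d j + t ≤ gFun n k d (j + t) := by
  intro t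
  induction t with
  | zero => simp
  | succ t ih =>
      have h1 := g_step n k d hd (j + t)
      have h2 := h (j + t) (by omega)
      have : j + (t + 1) = (j + t) + 1 := by omega
      rw [this]
      push_cast
      push_cast at ih
      linarith

theorem delta_negative_on_interval
    (n k s : ℕ) (hs : 1 ≤ s) (d : Fin s → ℕ) (hd : ∀ i, 2 ≤ d i)
    (hd2 : ¬(s = 1 ∧ ∀ i, d i = 2))
    (hδ : (k + 1 : ℤ) * ((n : ℤ) - (k : ℤ))
        - ∑ i, chooseZ ((d i : ℤ) + (k : ℤ)) (k : ℤ) < 0) :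
    (∀ k' : ℤ, -1 ≤ k' → k' ≤ (k : ℤ) - 1 → deltaKL n k d k' < 0) ∧
    deltaKL n k d (k : ℤ) = 0 := by
  have hd1 : ∀ i, 1 ≤ d i := fun i => le_trans (by norm_num) (hd i)
  have h0 : gFun n k d 0 < 0 := by
    have e : gFun n k d 0
        = (k + 1 : ℤ) * ((n : ℤ) - (k : ℤ))
          - ∑ i, chooseZ ((d i : ℤ) + (k : ℤ)) (k : ℤ) := by
      unfold gFun deltaKL
      have hz : ∀ i : Fin s,
          chooseZ ((d i : ℤ) + (((0:ℕ) : ℤ) - 1)) (((0:ℕ) : ℤ) - 1) = 0 := by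
        intro i
        simp [chooseZ]
      rw [Finset.sum_congr rfl fun i _ => hz i, Finset.sum_const_zero]
      generalize (∑ i, chooseZ ((d i : ℤ) + (k : ℤ)) (k : ℤ)) = S
      push_cast
      ring
    rw [e]; exact hδ
  have hk1 : gFun n k d (k + 1) = 0 := by
    unfold gFun deltaKL
    have e : ((k + 1 : ℕ) : ℤ) - 1 = (k : ℤ) := by push_cast; ring
    rw [e]; ring
  have hmain : ∀ j : ℕ, j ≤ k → gFun n k d j < 0 := by
    intro j hj
    by_cases hD : dFun n k d j ≤ 0
    · have h1 : ∀ i, i < j → dFun n k d i ≤ 0 := fun i hi =>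
        le_trans (d_mono n k d hs hd hd2 i j (by omega)) hD
      have := g_le_zero_step n k d hd1 j h1
      linarith
    · push_neg at hD
      have h1 : ∀ i, j ≤ i → 1 ≤ dFun n k d i := fun i hi =>
        le_trans (by omega) (d_mono n k d hs hd hd2 j i hi)
      have h2 := g_lower n k d hd1 j h1 (k + 1 - j)
      have e : j + (k + 1 - j) = k + 1 := by omega
      rw [e, hk1] at h2
      have : (1 : ℤ) ≤ ((k + 1 - j : ℕ) : ℤ) := by
        have : 1 ≤ k + 1 - j := by omega
        exact_mod_cast this
      linarith
  constructor
  · intro k' h1 h2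
    have hnn : 0 ≤ k' + 1 := by omega
    set j := (k' + 1).toNat with hjdef
    have hj : (j : ℤ) = k' + 1 := Int.toNat_of_nonneg hnn
    have hjk : j ≤ k := by omega
    have e : deltaKL n k d k' = gFun n k d j := by
      unfold gFun
      congr 1
      omega
    rw [e]
    exact hmain j hjk
  · unfold deltaKL; ring
end

section
/- Let n, k, r be natural numbers with 2k+2 ≤ r ≤ n+1. Then there exists a symmetric (n+1)×(n+1) complex matrix Q such that: Q has rank exactly r; Q_{uv} = 0 for all 0 ≤ u, v ≤ k (equivalently, the quadratic form x ↦ xᵀQx vanishes identically on the span of the standard basis vectors e_0,…,e_k); and the leading principal r×r submatrix of Q is invertible. -/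
open Matrix

lemma antidiag_sum (m c : ℕ) (i j : Fin m) :
    ∑ l : Fin m, (if (i:ℕ) + l = c then (1:ℂ) else 0) * (if (l:ℕ) + j = c then 1 else 0)
    = if (i:ℕ) = j ∧ (i:ℕ) ≤ c ∧ c < m + i then 1 else 0 := by
  by_cases h : (i:ℕ) ≤ c ∧ c < m + i
  · have hlt : c - i < m := by omega
    rw [Finset.sum_eq_single (⟨c - i, hlt⟩ : Fin m)]
    · simp only [Fin.val_mk]
      by_cases hij : (i:ℕ) = j
      · have hc : (c - (i:ℕ)) + (j:ℕ) = c := by omega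
        have hc2 : (i:ℕ) + (c - (i:ℕ)) = c := by omega
        rw [if_pos hc2, if_pos hc, one_mul, if_pos ⟨hij, h⟩]
      · have : ¬((c - (i:ℕ)) + j = c) := by omega
        simp [this, hij]
    · intro l _ hl
      have : ¬((i:ℕ) + l = c) := by
        intro hc
        apply hl
        ext; simp; omega
      simp [this]
    · simp
  · rw [Finset.sum_eq_zero, if_neg (by tauto)]
    intro l _
    have : ¬((i:ℕ) + l = c) := by
      have := l.isLt; omega
    simp [this]

theorem exists_rank_r_quadric_vanishing_on_kplane_with_invertible_corner
    (n k r : ℕ) (hr1 : 2 * k + 2 ≤ r) (hr2 : r ≤ n + 1) :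
    ∃ Q : Matrix (Fin (n + 1)) (Fin (n + 1)) ℂ,
      Qᵀ = Q ∧
      Q.rank = r ∧
      (∀ u v : Fin (n + 1), u.val ≤ k → v.val ≤ k → Q u v = 0) ∧
      IsUnit (Q.submatrix (Fin.castLE hr2) (Fin.castLE hr2)).det := by
  set Q : Matrix (Fin (n+1)) (Fin (n+1)) ℂ :=
    Matrix.of fun u v => if (u:ℕ) + v = r - 1 then 1 else 0 with hQdef
  have hQQ : Q * Q = Matrix.diagonal (fun i : Fin (n+1) => if (i:ℕ) < r then (1:ℂ) else 0) := by
    ext i j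
    rw [Matrix.mul_apply]
    simp only [hQdef, Matrix.of_apply]
    rw [antidiag_sum]
    rcases eq_or_ne (i:ℕ) (j:ℕ) with hij | hij
    · have hij' : i = j := Fin.ext hij
      subst hij'
      have := i.isLt
      by_cases h : (i:ℕ) < r
      · rw [if_pos ⟨rfl, by omega, by omega⟩]; simp [h]
      · rw [if_neg (by omega)]; simp [h]
    · rw [if_neg (by tauto), Matrix.diagonal_apply_ne _ (fun h => hij (by rw [h]))]
  refine ⟨Q, ?_, ?_, ?_, ?_⟩
  · ext i j; simp [hQdef, Matrix.transpose_apply, add_comm]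
  · -- rank
    have h1 : Q.rank ≤ (Q * Q).rank := by
      have : Q * Q * Q = Q := by
        rw [hQQ]
        ext i j
        rw [Matrix.diagonal_mul]
        simp only [hQdef, Matrix.of_apply]
        by_cases h : (i:ℕ) + j = r - 1
        · have : (i:ℕ) < r := by omega
          simp [h, this]
        · simp [h]
      calc Q.rank = (Q * Q * Q).rank := by rw [this]
        _ ≤ (Q * Q).rank := Matrix.rank_mul_le_left _ _
    have h2 : (Q * Q).rank ≤ Q.rank := Matrix.rank_mul_le_left _ _
    have h3 : (Q * Q).rank = r := by
      rw [hQQ, Matrix.rank_diagonal]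
      have : ∀ i : Fin (n+1), (if (i:ℕ) < r then (1:ℂ) else 0) ≠ 0 ↔ (i:ℕ) < r := by
        intro i; by_cases h : (i:ℕ) < r <;> simp [h]
      rw [Fintype.card_congr (Equiv.subtypeEquivRight this)]
      rw [Fintype.card_congr ((Fin.castLEOrderIso hr2).toEquiv.symm)]
      exact Fintype.card_fin r
    omega
  · intro u v hu hv
    have : ¬((u:ℕ) + v = r - 1) := by omega
    simp [hQdef, this]
  · set S := Q.submatrix (Fin.castLE hr2) (Fin.castLE hr2) with hS
    have hSS : S * S = 1 := by
      ext i j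
      rw [Matrix.mul_apply]
      simp only [hS, Matrix.submatrix_apply, hQdef, Matrix.of_apply, Fin.coe_castLE]
      rw [antidiag_sum]
      have hi := i.isLt; have hj := j.isLt
      rcases eq_or_ne (i:ℕ) (j:ℕ) with hij | hij
      · have hij' : i = j := Fin.ext hij
        subst hij'
        rw [if_pos ⟨rfl, by omega, by omega⟩, Matrix.one_apply_eq]
      · rw [if_neg (by tauto), Matrix.one_apply_ne (fun h => hij (by rw [h]))]
    have : S.det * S.det = 1 := by
      rw [← Matrix.det_mul, hSS, Matrix.det_one]
    exact IsUnit.of_mul_eq_one _ this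
end
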